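/- For any Weyl group element w ∈ W_Φ and any root subsystem Δ ⊆ Φ, there exists a unique element σ of the Weyl group W_Δ of Δ such that I_Δ(σ) = I_Φ(w) ∩ Δ, where Δ₊ = Δ ∩ Φ₊ serves as the positive system for Δ. (This defines the flattening map f_Δ : W_Φ → W_Δ.) -/

import Mathlib

open scoped RealInnerProductSpace

variable {V : Type*} [NormedAddCommGroup V] [InnerProductSpace ℝ V] [FiniteDimensional ℝ V]

/-- The reflection in the hyperplane orthogonal to `α`. -/
noncomputable def rootReflection (α : V) : V ≃ₗᵢ[ℝ] V := Submodule.reflection (ℝ ∙ α)ᗮ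

/-- A finite crystallographic (reduced) root system in `V`. -/
structure IsRootSystem (Φ : Set V) : Prop where
  finite : Φ.Finite
  ne_zero : ∀ α ∈ Φ, α ≠ 0
  reflect_mem : ∀ α ∈ Φ, ∀ β ∈ Φ, rootReflection α β ∈ Φ
  crystal : ∀ α ∈ Φ, ∀ β ∈ Φ, ∃ k : ℤ, 2 * ⟪β, α⟫ / ⟪α, α⟫ = (k : ℝ)
  reduced : ∀ α ∈ Φ, ∀ t : ℝ, t • α ∈ Φ → t = 1 ∨ t = -1

/-- `P` is a system of positive roots for `Φ`, cut out by a linear functional. -/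
def IsPositiveSystem (Φ P : Set V) : Prop :=
  ∃ h : V →ₗ[ℝ] ℝ, (∀ α ∈ Φ, h α ≠ 0) ∧ P = {α ∈ Φ | 0 < h α}

/-- The Weyl group: the subgroup of isometries generated by the root reflections. -/
noncomputable def weylGroup (Φ : Set V) : Subgroup (V ≃ₗᵢ[ℝ] V) :=
  Subgroup.closure {g | ∃ α ∈ Φ, g = rootReflection α}

/-- The inversion set `I(w) = Φ₊ ∩ w(Φ₋)`. -/
def invSet (P : Set V) (w : V ≃ₗᵢ[ℝ] V) : Set V := P ∩ (⇑w '' (-P))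

/-- A simple root: a positive root that is not the sum of two positive roots. -/
def IsSimpleRoot (P : Set V) (α : V) : Prop :=
  α ∈ P ∧ ¬∃ β ∈ P, ∃ γ ∈ P, α = β + γ

/-- The length of `w`: minimal length of a word in simple reflections for `w`. -/
noncomputable def wlen (P : Set V) (w : V ≃ₗᵢ[ℝ] V) : ℕ :=
  sInf {n | ∃ l : List V, (∀ α ∈ l, IsSimpleRoot P α) ∧ l.length = n ∧
    (l.map rootReflection).prod = w}

/-- Bruhat order. -/
def bruhatLE (Φ P : Set V) : (V ≃ₗᵢ[ℝ] V) → (V ≃ₗᵢ[ℝ] V) → Prop :=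
  Relation.ReflTransGen fun a b =>
    (∃ α ∈ Φ, b = rootReflection α * a) ∧ wlen P a < wlen P b

def bruhatLT (Φ P : Set V) (a b : V ≃ₗᵢ[ℝ] V) : Prop := bruhatLE Φ P a b ∧ a ≠ b

/-- The parabolic subgroup generated by reflections in the roots of `J`. -/
noncomputable def parabolic (J : Set V) : Subgroup (V ≃ₗᵢ[ℝ] V) :=
  Subgroup.closure {g | ∃ α ∈ J, g = rootReflection α}

/-- Minimal length representatives of the cosets `W_J\W`. -/
def minReps (Φ P J : Set V) : Set (V ≃ₗᵢ[ℝ] V) :=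
  {v | v ∈ weylGroup Φ ∧ ∀ u ∈ parabolic J, wlen P v ≤ wlen P (u * v)}


set_option linter.unusedSectionVars false
set_option linter.unusedVariables false
set_option maxHeartbeats 1000000

theorem rr_apply (α v : V) : rootReflection α v = v - (2 * ⟪v, α⟫ / ⟪α, α⟫) • α := by
  by_cases hα : α = 0
  · subst hα
    simp [rootReflection, Submodule.reflection_apply, Submodule.starProjection_eq_self_iff.2 (Submodule.mem_top),
      two_smul]
  rw [rootReflection, Submodule.reflection_apply, Submodule.starProjection_orthogonal_val,
    Submodule.starProjection_singleton]
  rw [real_inner_self_eq_norm_sq, real_inner_comm]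
  push_cast
  have : (2 * inner ℝ v α / ‖α‖ ^ 2 : ℝ) = 2 * (inner ℝ v α / ‖α‖^2) := by ring
  rw [this, mul_smul, two_smul, two_smul]
  abel

theorem lie_mul_apply (e f : V ≃ₗᵢ[ℝ] V) (v : V) : (e * f) v = e (f v) := rfl
theorem lie_one_apply (v : V) : (1 : V ≃ₗᵢ[ℝ] V) v = v := rfl

theorem rr_symm (α : V) : (rootReflection α).symm = rootReflection α := Submodule.reflection_symm
theorem rr_inv (α : V) : (rootReflection α)⁻¹ = rootReflection α := by
  rw [LinearIsometryEquiv.inv_def, rr_symm]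

theorem rr_rr (α v : V) : rootReflection α (rootReflection α v) = v := Submodule.reflection_reflection _ _

theorem rr_mul_self (α : V) : rootReflection α * rootReflection α = 1 := by
  ext v; exact rr_rr α v

theorem rr_self (α : V) (hα : α ≠ 0) : rootReflection α α = -α :=
  Submodule.reflection_orthogonalComplement_singleton_eq_neg α

theorem rr_neg (α : V) : rootReflection (-α) = rootReflection α := by
  ext v
  rw [rr_apply, rr_apply, inner_neg_right, inner_neg_neg]
  rw [smul_neg, ← neg_smul]
  congr 2
  ring

theorem rr_conj (w : V ≃ₗᵢ[ℝ] V) (α : V) :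
    rootReflection (w α) = w * rootReflection α * w⁻¹ := by
  ext v
  rw [lie_mul_apply, lie_mul_apply, LinearIsometryEquiv.coe_inv, rr_apply, rr_apply, map_sub,
    map_smul, LinearIsometryEquiv.apply_symm_apply]
  congr 2
  rw [← LinearIsometryEquiv.inner_map_map w (w.symm v) α, LinearIsometryEquiv.apply_symm_apply,
    ← LinearIsometryEquiv.inner_map_map w α α]

def posOf (Δ : Set V) (h : V →ₗ[ℝ] ℝ) : Set V := {α | α ∈ Δ ∧ 0 < h α}

section RS
variable {Δ : Set V} (hRS : IsRootSystem Δ) {h : V →ₗ[ℝ] ℝ} (hreg : ∀ α ∈ Δ, h α ≠ 0)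
include hRS

theorem neg_mem_rs {α : V} (hα : α ∈ Δ) : -α ∈ Δ := by
  have := hRS.reflect_mem α hα α hα
  rwa [rr_self α (hRS.ne_zero α hα)] at this

theorem weyl_stab : ∀ w ∈ weylGroup Δ, ∀ v ∈ Δ, w v ∈ Δ ∧ w.symm v ∈ Δ := by
  intro w hw
  refine Subgroup.closure_induction ?_ ?_ ?_ ?_ hw
  · rintro x ⟨α, hα, rfl⟩ v hv
    exact ⟨hRS.reflect_mem α hα v hv, by rw [rr_symm]; exact hRS.reflect_mem α hα v hv⟩
  · intro v hv; exact ⟨hv, hv⟩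
  · intro x y hx hy ihx ihy v hv
    constructor
    · rw [lie_mul_apply]; exact (ihx _ ((ihy v hv).1)).1
    · have hxy : (x * y).symm v = y.symm (x.symm v) := by
        rw [← LinearIsometryEquiv.coe_inv, mul_inv_rev, lie_mul_apply,
          LinearIsometryEquiv.coe_inv, LinearIsometryEquiv.coe_inv]
      rw [hxy]; exact (ihy _ ((ihx v hv).2)).2
  · intro x hx ihx v hv
    constructor
    · rw [LinearIsometryEquiv.coe_inv]; exact (ihx v hv).2
    · rw [LinearIsometryEquiv.inv_def, LinearIsometryEquiv.symm_symm]; exact (ihx v hv).1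

include hreg

theorem pos_trichotomy {α : V} (hα : α ∈ Δ) : α ∈ posOf Δ h ∨ -α ∈ posOf Δ h := by
  rcases lt_or_gt_of_ne (hreg α hα) with hlt | hgt
  · right; exact ⟨neg_mem_rs hRS hα, by simpa using hlt⟩
  · left; exact ⟨hα, hgt⟩

theorem pos_of_mem {α : V} (hα : α ∈ Δ) (hn : -α ∉ posOf Δ h) : α ∈ posOf Δ h := by
  rcases pos_trichotomy hRS hreg hα with h1 | h1
  · exact h1
  · exact absurd h1 hn

/-- the key lemma: a simple reflection permutes the other positive roots -/
theorem simple_reflect_mem {α β : V} (hα : IsSimpleRoot (posOf Δ h) α)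
    (hβ : β ∈ posOf Δ h) (hne : β ≠ α) : rootReflection α β ∈ posOf Δ h := by
  obtain ⟨⟨hαΔ, hαpos⟩, hαsimp⟩ := hα
  obtain ⟨hβΔ, hβpos⟩ := hβ
  have hα0 : α ≠ 0 := hRS.ne_zero α hαΔ
  have hβ0 : β ≠ 0 := hRS.ne_zero β hβΔ
  have hαα : (0:ℝ) < ⟪α, α⟫ := by
    rw [real_inner_self_eq_norm_sq]; exact pow_pos (norm_pos_iff.2 hα0) 2
  have hββ : (0:ℝ) < ⟪β, β⟫ := by
    rw [real_inner_self_eq_norm_sq]; exact pow_pos (norm_pos_iff.2 hβ0) 2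
  obtain ⟨k, hk⟩ := hRS.crystal α hαΔ β hβΔ
  obtain ⟨k', hk'⟩ := hRS.crystal β hβΔ α hαΔ
  have hk2 : 2 * ⟪β, α⟫ = (k:ℝ) * ⟪α, α⟫ := by
    field_simp [ne_of_gt hαα] at hk; linear_combination hk
  have hk'2 : 2 * ⟪α, β⟫ = (k':ℝ) * ⟪β, β⟫ := by
    field_simp [ne_of_gt hββ] at hk'; linear_combination hk'
  by_contra hnot
  have hsβΔ : rootReflection α β ∈ Δ := hRS.reflect_mem α hαΔ β hβΔ
  have hform : rootReflection α β = β - (k:ℝ) • α := by rw [rr_apply, hk]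
  have hsβneg : h (rootReflection α β) < 0 := by
    rcases lt_or_gt_of_ne (hreg _ hsβΔ) with hlt | hgt
    · exact hlt
    · exact absurd ⟨hsβΔ, hgt⟩ hnot
  have hγΔ : (k:ℝ) • α - β ∈ Δ := by
    have := neg_mem_rs hRS hsβΔ
    rwa [hform, neg_sub] at this
  have hval : h β - (k:ℝ) * h α < 0 := by
    have h1 : h (rootReflection α β) = h β - (k:ℝ) * h α := by
      rw [hform, map_sub, map_smul, smul_eq_mul]
    linarith
  have hγpos : 0 < h ((k:ℝ) • α - β) := by
    have h2 : h ((k:ℝ) • α - β) = (k:ℝ) * h α - h β := by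
      rw [map_sub, map_smul, smul_eq_mul]
    linarith
  have hkpos : (0:ℝ) < (k:ℝ) := by nlinarith
  have hk1 : 1 ≤ k := by
    have : (0:ℤ) < k := by exact_mod_cast hkpos
    omega
  have hβα : (0:ℝ) < ⟪β, α⟫ := by nlinarith
  have hαβ : (0:ℝ) < ⟪α, β⟫ := by rwa [real_inner_comm]
  have hk'pos : (0:ℝ) < (k':ℝ) := by nlinarith
  have hk'1 : 1 ≤ k' := by
    have : (0:ℤ) < k' := by exact_mod_cast hk'pos
    omega
  -- strict Cauchy-Schwarz
  have hcs : ⟪β, α⟫ < ‖β‖ * ‖α‖ := by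
    rw [inner_lt_norm_mul_iff_real]
    intro hcontra
    have hno : ‖α‖ ≠ 0 := norm_ne_zero_iff.2 hα0
    have hβeq : β = (‖α‖⁻¹ * ‖β‖) • α := by
      have h5 : (‖α‖:ℝ)⁻¹ • ((‖α‖:ℝ) • β) = (‖α‖:ℝ)⁻¹ • ((‖β‖:ℝ) • α) := by rw [hcontra]
      rwa [smul_smul, smul_smul, inv_mul_cancel₀ hno, one_smul] at h5
    rcases hRS.reduced α hαΔ (‖α‖⁻¹ * ‖β‖) (by rw [← hβeq]; exact hβΔ) with ht | ht
    · rw [ht, one_smul] at hβeq; exact hne hβeq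
    · have hgt0 : (0:ℝ) < ‖α‖⁻¹ * ‖β‖ := by positivity
      rw [ht] at hgt0; norm_num at hgt0
  have e3 : ⟪β, α⟫ = ⟪α, β⟫ := real_inner_comm α β
  have key : (k:ℝ) * (k':ℝ) * (⟪α,α⟫ * ⟪β,β⟫) = 4 * (⟪β,α⟫ * ⟪β,α⟫) := by
    linear_combination (-(k':ℝ) * ⟪β,β⟫) * hk2 - (2 * ⟪β,α⟫) * hk'2 - (4 * ⟪β,α⟫) * e3
  have hsq : ⟪β,α⟫ * ⟪β,α⟫ < (‖β‖ * ‖α‖) * (‖β‖ * ‖α‖) := mul_self_lt_mul_self hβα.le hcs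
  have e1 : ⟪α, α⟫ = ‖α‖ * ‖α‖ := real_inner_self_eq_norm_mul_norm α
  have e2 : ⟪β, β⟫ = ‖β‖ * ‖β‖ := real_inner_self_eq_norm_mul_norm β
  have hABpos : (0:ℝ) < ⟪α,α⟫ * ⟪β,β⟫ := mul_pos hαα hββ
  have h4 : (k:ℝ) * (k':ℝ) * (⟪α,α⟫ * ⟪β,β⟫) < 4 * (⟪α,α⟫ * ⟪β,β⟫) := by
    rw [key]; nlinarith [hsq]
  have hkk4 : (k:ℝ) * (k':ℝ) < 4 := lt_of_mul_lt_mul_right h4 hABpos.le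
  have hkk3 : k * k' ≤ 3 := by
    have h5 : ((k * k' : ℤ):ℝ) < 4 := by push_cast; exact hkk4
    have h6 : (k * k' : ℤ) < 4 := by exact_mod_cast h5
    omega
  have hk3 : k ≤ 3 := by nlinarith
  rcases (by omega : k = 1 ∨ k = 2 ∨ k = 3) with hcase | hcase | hcase
  · -- k = 1 : α = β + (α - β)
    have hc1 : (k:ℝ) = 1 := by rw [hcase]; norm_num
    exact hαsimp ⟨β, ⟨hβΔ, hβpos⟩, (k:ℝ) • α - β, ⟨hγΔ, hγpos⟩, by rw [hc1]; module⟩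
  all_goals {
    -- k = 2 or 3, so k' = 1 and α - β ∈ Δ
    have hk'le : k' ≤ 1 := by nlinarith
    have hk'one : (k':ℝ) = 1 := by
      have : k' = 1 := le_antisymm hk'le hk'1
      rw [this]; norm_num
    have hsαform : rootReflection β α = α - β := by
      rw [rr_apply, hk', hk'one, one_smul]
    have hαβΔ : α - β ∈ Δ := by
      have := hRS.reflect_mem β hβΔ α hαΔ; rwa [hsαform] at this
    rcases lt_or_gt_of_ne (hreg _ hαβΔ) with hlt | hgt
    swap
    · exact hαsimp ⟨β, ⟨hβΔ, hβpos⟩, α - β, ⟨hαβΔ, hgt⟩, by module⟩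
    have hδΔ : β - α ∈ Δ := by have := neg_mem_rs hRS hαβΔ; rwa [neg_sub] at this
    have hδpos : 0 < h (β - α) := by
      have he : h (β - α) = -(h (α - β)) := by rw [map_sub, map_sub]; ring
      linarith
    first
    | -- k = 2 : α = (2α - β) + (β - α)
      (have hc2 : (k:ℝ) = 2 := by rw [hcase]; norm_num
       exact hαsimp ⟨(k:ℝ) • α - β, ⟨hγΔ, hγpos⟩, β - α, ⟨hδΔ, hδpos⟩, by rw [hc2]; module⟩)
    | -- k = 3
      (have hc3 : (k:ℝ) = 3 := by rw [hcase]; norm_num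
       have hεform : rootReflection α (β - α) = β - (2:ℝ) • α := by
         rw [rr_apply]
         have hco : 2 * ⟪β - α, α⟫ / ⟪α, α⟫ = 1 := by
           rw [inner_sub_left]
           rw [hc3] at hk2
           field_simp
           linarith
         rw [hco, one_smul]; module
       have hεΔ : β - (2:ℝ) • α ∈ Δ := by
         have := hRS.reflect_mem α hαΔ _ hδΔ; rwa [hεform] at this
       rcases lt_or_gt_of_ne (hreg _ hεΔ) with hε | hε
       · have hmΔ : (2:ℝ) • α - β ∈ Δ := by
           have := neg_mem_rs hRS hεΔ; rwa [neg_sub] at this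
         have hmpos : 0 < h ((2:ℝ) • α - β) := by
           have he : h ((2:ℝ) • α - β) = -(h (β - (2:ℝ) • α)) := by
             rw [map_sub, map_sub]; ring
           linarith
         exact hαsimp ⟨(2:ℝ) • α - β, ⟨hmΔ, hmpos⟩, β - α, ⟨hδΔ, hδpos⟩, by module⟩
       · exact hαsimp ⟨(k:ℝ) • α - β, ⟨hγΔ, hγpos⟩, β - (2:ℝ) • α, ⟨hεΔ, hε⟩,
           by rw [hc3]; module⟩) }
end RS

def negOf (Δ : Set V) (h : V →ₗ[ℝ] ℝ) (g : V → ℝ) : Set V := {β | β ∈ Δ ∧ 0 < h β ∧ g β < 0}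

theorem lie_symm_eq_inv (σ : V ≃ₗᵢ[ℝ] V) (v : V) : σ.symm v = σ⁻¹ v := by
  rw [LinearIsometryEquiv.coe_inv]

theorem mul_rr_symm (σ : V ≃ₗᵢ[ℝ] V) (α β : V) :
    (rootReflection α * σ).symm β = σ.symm (rootReflection α β) := by
  rw [← LinearIsometryEquiv.coe_inv, mul_inv_rev, rr_inv, lie_mul_apply,
    LinearIsometryEquiv.coe_inv]

theorem negOf_finite (hRS : IsRootSystem Δ) (h : V →ₗ[ℝ] ℝ) (g : V → ℝ) :
    (negOf Δ h g).Finite := hRS.finite.subset (fun _ hx => hx.1)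

section RS2
variable {Δ : Set V} (hRS : IsRootSystem Δ) {h : V →ₗ[ℝ] ℝ} (hreg : ∀ α ∈ Δ, h α ≠ 0)
include hRS hreg

theorem negOf_reflect (g : V → ℝ) (hgodd : ∀ v, g (-v) = -g v) {α : V}
    (hα : IsSimpleRoot (posOf Δ h) α) (hαg : α ∈ negOf Δ h g) :
    negOf Δ h (fun v => g (rootReflection α v)) =
      rootReflection α '' (negOf Δ h g \ {α}) := by
  have hαΔ : α ∈ Δ := hα.1.1
  have hα0 : α ≠ 0 := hRS.ne_zero α hαΔ
  ext γ
  constructor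
  · rintro ⟨hγΔ, hγpos, hγneg⟩
    simp only at hγneg
    have hγα : γ ≠ α := by
      rintro rfl
      rw [rr_self _ hα0, hgodd] at hγneg
      linarith [hαg.2.2]
    have hβpos : rootReflection α γ ∈ posOf Δ h :=
      simple_reflect_mem hRS hreg hα ⟨hγΔ, hγpos⟩ hγα
    refine ⟨rootReflection α γ, ⟨⟨hβpos.1, hβpos.2, hγneg⟩, ?_⟩, rr_rr α γ⟩
    intro hmem
    rw [Set.mem_singleton_iff] at hmem
    have : γ = -α := by
      have := congrArg (rootReflection α) hmem
      rwa [rr_rr, rr_self _ hα0] at this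
    rw [this] at hγpos
    rw [map_neg] at hγpos
    linarith [hα.1.2]
  · rintro ⟨β, ⟨⟨hβΔ, hβpos, hβneg⟩, hβα⟩, rfl⟩
    rw [Set.mem_singleton_iff] at hβα
    have hγpos : rootReflection α β ∈ posOf Δ h :=
      simple_reflect_mem hRS hreg hα ⟨hβΔ, hβpos⟩ hβα
    exact ⟨hγpos.1, hγpos.2, show g (rootReflection α (rootReflection α β)) < 0 by rwa [rr_rr]⟩

theorem negOf_reflect_card (g : V → ℝ) (hgodd : ∀ v, g (-v) = -g v) {α : V}
    (hα : IsSimpleRoot (posOf Δ h) α) (hαg : α ∈ negOf Δ h g) :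
    (negOf Δ h (fun v => g (rootReflection α v))).ncard < (negOf Δ h g).ncard := by
  rw [negOf_reflect hRS hreg g hgodd hα hαg,
    Set.ncard_image_of_injective _ (rootReflection α).injective]
  exact Set.ncard_diff_singleton_lt_of_mem hαg (negOf_finite hRS h g)

theorem exists_min_simple (g : V → ℝ) (hadd : ∀ x y, g (x + y) = g x + g y)
    (hne : (negOf Δ h g).Nonempty) :
    ∃ α ∈ negOf Δ h g, IsSimpleRoot (posOf Δ h) α := by
  obtain ⟨α, hαmem, hmin⟩ := Set.exists_min_image (negOf Δ h g) h (negOf_finite hRS h g) hne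
  refine ⟨α, hαmem, ⟨hαmem.1, hαmem.2.1⟩, ?_⟩
  rintro ⟨β, hβ, γ, hγ, heq⟩
  have hga : g α = g β + g γ := by rw [heq, hadd]
  have hha : h α = h β + h γ := by rw [heq, map_add]
  rcases lt_or_ge (g β) 0 with hgβ | hgβ
  · have : α ∈ negOf Δ h g → h α ≤ h β := fun _ => hmin β ⟨hβ.1, hβ.2, hgβ⟩
    have := this hαmem
    linarith [hγ.2]
  · have hgγ : g γ < 0 := by linarith [hαmem.2.2]
    have := hmin γ ⟨hγ.1, hγ.2, hgγ⟩
    linarith [hβ.2]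

/-! ### Generation by simple reflections and triviality of the chamber stabilizer -/

theorem sum_of_simples : ∀ (n : ℕ), ∀ β ∈ posOf Δ h,
    {γ ∈ posOf Δ h | h γ < h β}.ncard < n →
    ∃ l : List V, l ≠ [] ∧ (∀ α ∈ l, IsSimpleRoot (posOf Δ h) α) ∧ l.sum = β := by
  intro n
  induction n with
  | zero => intro β hβ hcard; exact absurd hcard (Nat.not_lt_zero _)
  | succ n ih =>
    intro β hβ hcard
    by_cases hsimp : IsSimpleRoot (posOf Δ h) β
    · exact ⟨[β], by simp, by simpa using hsimp, by simp⟩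
    · have hex : ∃ γ ∈ posOf Δ h, ∃ δ ∈ posOf Δ h, β = γ + δ := by
        by_contra hc; exact hsimp ⟨hβ, hc⟩
      obtain ⟨γ, hγ, δ, hδ, heq⟩ := hex
      have hγlt : h γ < h β := by rw [heq, map_add]; linarith [hδ.2]
      have hδlt : h δ < h β := by rw [heq, map_add]; linarith [hγ.2]
      have hfin : {x ∈ posOf Δ h | h x < h β}.Finite :=
        hRS.finite.subset (fun x hx => hx.1.1)
      have hssγ : {x ∈ posOf Δ h | h x < h γ} ⊂ {x ∈ posOf Δ h | h x < h β} := by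
        constructor
        · rintro x ⟨hx1, hx2⟩; exact ⟨hx1, lt_trans hx2 hγlt⟩
        · intro hsub
          exact absurd ((hsub ⟨hγ, hγlt⟩).2) (lt_irrefl _)
      have hssδ : {x ∈ posOf Δ h | h x < h δ} ⊂ {x ∈ posOf Δ h | h x < h β} := by
        constructor
        · rintro x ⟨hx1, hx2⟩; exact ⟨hx1, lt_trans hx2 hδlt⟩
        · intro hsub
          exact absurd ((hsub ⟨hδ, hδlt⟩).2) (lt_irrefl _)
      obtain ⟨l1, hl1ne, hl1s, hl1sum⟩ := ih γ hγ (by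
        have := Set.ncard_lt_ncard hssγ hfin; omega)
      obtain ⟨l2, hl2ne, hl2s, hl2sum⟩ := ih δ hδ (by
        have := Set.ncard_lt_ncard hssδ hfin; omega)
      refine ⟨l1 ++ l2, by simp [hl1ne], ?_, by rw [List.sum_append, hl1sum, hl2sum, heq]⟩
      intro a ha
      rcases List.mem_append.1 ha with ha | ha
      · exact hl1s a ha
      · exact hl2s a ha

theorem exists_simple_inner_pos {β : V} (hβ : β ∈ posOf Δ h) :
    ∃ α, IsSimpleRoot (posOf Δ h) α ∧ (0:ℝ) < ⟪β, α⟫ := by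
  obtain ⟨l, hlne, hls, hlsum⟩ := sum_of_simples hRS hreg
    ({γ ∈ posOf Δ h | h γ < h β}.ncard + 1) β hβ (Nat.lt_succ_self _)
  have hββ : (0:ℝ) < ⟪β, β⟫ := by
    rw [real_inner_self_eq_norm_sq]
    exact pow_pos (norm_pos_iff.2 (hRS.ne_zero β hβ.1)) 2
  by_contra hc
  push_neg at hc
  have hsumle : ∀ l' : List V, (∀ α ∈ l', IsSimpleRoot (posOf Δ h) α) → ⟪β, l'.sum⟫ ≤ 0 := by
    intro l'
    induction l' with
    | nil => intro _; simp
    | cons a l'' ih' =>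
      intro hmem
      rw [List.sum_cons, inner_add_right]
      have h1 := hc a (hmem a (List.mem_cons_self (a := a) (l := l'')))
      have h2 := ih' (fun x hx => hmem x (List.mem_cons_of_mem _ hx))
      linarith
  have := hsumle l hls
  rw [hlsum] at this
  linarith

theorem refl_mem_simple_closure : ∀ (n : ℕ), ∀ β ∈ posOf Δ h,
    {γ ∈ posOf Δ h | h γ < h β}.ncard < n →
    rootReflection β ∈
      Subgroup.closure {g : V ≃ₗᵢ[ℝ] V | ∃ α, IsSimpleRoot (posOf Δ h) α ∧ g = rootReflection α} := by
  intro n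
  induction n with
  | zero => intro β hβ hcard; exact absurd hcard (Nat.not_lt_zero _)
  | succ n ih =>
    intro β hβ hcard
    by_cases hsimp : IsSimpleRoot (posOf Δ h) β
    · exact Subgroup.subset_closure ⟨β, hsimp, rfl⟩
    · obtain ⟨α, hαsimp, hβα⟩ := exists_simple_inner_pos hRS hreg hβ
      have hβneα : β ≠ α := by rintro rfl; exact hsimp hαsimp
      have hβ' : rootReflection α β ∈ posOf Δ h :=
        simple_reflect_mem hRS hreg hαsimp hβ hβneα
      have hαα : (0:ℝ) < ⟪α, α⟫ := by
        rw [real_inner_self_eq_norm_sq]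
        exact pow_pos (norm_pos_iff.2 (hRS.ne_zero α hαsimp.1.1)) 2
      have hhlt : h (rootReflection α β) < h β := by
        rw [rr_apply, map_sub, map_smul, smul_eq_mul]
        have hcoef : (0:ℝ) < 2 * ⟪β, α⟫ / ⟪α, α⟫ := by positivity
        nlinarith [hαsimp.1.2]
      have hss : {x ∈ posOf Δ h | h x < h (rootReflection α β)} ⊂
          {x ∈ posOf Δ h | h x < h β} := by
        constructor
        · rintro x ⟨hx1, hx2⟩; exact ⟨hx1, lt_trans hx2 hhlt⟩
        · intro hsub
          exact absurd ((hsub ⟨hβ', hhlt⟩).2) (lt_irrefl _)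
      have hfin : {x ∈ posOf Δ h | h x < h β}.Finite :=
        hRS.finite.subset (fun x hx => hx.1.1)
      have hmem := ih (rootReflection α β) hβ' (by
        have := Set.ncard_lt_ncard hss hfin; omega)
      have hconj : rootReflection β =
          rootReflection α * rootReflection (rootReflection α β) * (rootReflection α)⁻¹ := by
        have := rr_conj (rootReflection α) (rootReflection α β)
        rwa [rr_rr] at this
      rw [hconj]
      exact mul_mem (mul_mem (Subgroup.subset_closure ⟨α, hαsimp, rfl⟩) hmem)
        (inv_mem (Subgroup.subset_closure ⟨α, hαsimp, rfl⟩))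

theorem weyl_le_simple_closure : weylGroup Δ ≤
    Subgroup.closure {g : V ≃ₗᵢ[ℝ] V | ∃ α, IsSimpleRoot (posOf Δ h) α ∧ g = rootReflection α} := by
  rw [weylGroup, Subgroup.closure_le]
  rintro g ⟨α, hα, rfl⟩
  rcases pos_trichotomy hRS hreg hα with hpos | hpos
  · exact refl_mem_simple_closure hRS hreg
      ({γ ∈ posOf Δ h | h γ < h α}.ncard + 1) α hpos (Nat.lt_succ_self _)
  · have := refl_mem_simple_closure hRS hreg
      ({γ ∈ posOf Δ h | h γ < h (-α)}.ncard + 1) (-α) hpos (Nat.lt_succ_self _)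
    rwa [rr_neg] at this

theorem list_to_word : ∀ l : List (V ≃ₗᵢ[ℝ] V),
    (∀ y ∈ l, ∃ α, IsSimpleRoot (posOf Δ h) α ∧ y = rootReflection α) →
    ∃ m : List V, (∀ α ∈ m, IsSimpleRoot (posOf Δ h) α) ∧ m.map rootReflection = l := by
  intro l
  induction l with
  | nil => intro _; exact ⟨[], by simp, by simp⟩
  | cons y l' ih =>
    intro hmem
    obtain ⟨α, hα, rfl⟩ := hmem y (List.mem_cons_self (a := y) (l := l'))
    obtain ⟨m', hm's, hm'⟩ := ih (fun x hx => hmem x (List.mem_cons_of_mem _ hx))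
    refine ⟨α :: m', ?_, by simp [hm']⟩
    intro a ha
    rcases List.mem_cons.1 ha with rfl | ha
    · exact hα
    · exact hm's a ha

theorem exists_word {σ : V ≃ₗᵢ[ℝ] V} (hσ : σ ∈ weylGroup Δ) :
    ∃ m : List V, (∀ α ∈ m, IsSimpleRoot (posOf Δ h) α) ∧
      (m.map rootReflection).prod = σ := by
  have h1 : σ ∈ Subgroup.closure
      {g : V ≃ₗᵢ[ℝ] V | ∃ α, IsSimpleRoot (posOf Δ h) α ∧ g = rootReflection α} :=
    weyl_le_simple_closure hRS hreg hσ
  have h2 : σ ∈ (Subgroup.closure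
      {g : V ≃ₗᵢ[ℝ] V | ∃ α, IsSimpleRoot (posOf Δ h) α ∧ g = rootReflection α}).toSubmonoid := h1
  rw [Subgroup.closure_toSubmonoid] at h2
  obtain ⟨l, hl, hlprod⟩ := Submonoid.exists_list_of_mem_closure h2
  have hl' : ∀ y ∈ l, ∃ α, IsSimpleRoot (posOf Δ h) α ∧ y = rootReflection α := by
    intro y hy
    rcases hl y hy with hy' | hy'
    · exact hy'
    · obtain ⟨α, hα, hyα⟩ := hy'
      refine ⟨α, hα, ?_⟩
      calc y = (y⁻¹)⁻¹ := by rw [inv_inv]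
      _ = (rootReflection α)⁻¹ := by rw [hyα]
      _ = rootReflection α := rr_inv α
  obtain ⟨m, hms, hmmap⟩ := list_to_word hRS hreg l hl'
  exact ⟨m, hms, by rw [hmmap, hlprod]⟩

theorem exch : ∀ (m : List V), (∀ α ∈ m, IsSimpleRoot (posOf Δ h) α) →
    ∀ β ∈ posOf Δ h, ((m.map rootReflection).prod) β ∉ posOf Δ h →
    ∃ m' : List V, (∀ α ∈ m', IsSimpleRoot (posOf Δ h) α) ∧
      m'.length + 1 = m.length ∧
      (m'.map rootReflection).prod = (m.map rootReflection).prod * rootReflection β := by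
  intro m
  induction m with
  | nil =>
    intro _ β hβ hcon
    simp only [List.map_nil, List.prod_nil, lie_one_apply] at hcon
    exact absurd hβ hcon
  | cons α m' ihm =>
    intro hsimp β hβ hcon
    have hprod : ((α :: m').map rootReflection).prod =
        rootReflection α * (m'.map rootReflection).prod := by
      simp [List.map_cons, List.prod_cons]
    set u := (m'.map rootReflection).prod with hu
    have huW : u ∈ weylGroup Δ := by
      apply Submonoid.list_prod_mem
      intro x hx
      obtain ⟨a, ha, rfl⟩ := List.mem_map.1 hx
      exact Subgroup.subset_closure ⟨a, (hsimp a (List.mem_cons_of_mem _ ha)).1.1, rfl⟩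
    have hγΔ : u β ∈ Δ := (weyl_stab hRS u huW β hβ.1).1
    by_cases hγ : u β ∈ posOf Δ h
    · have hne : rootReflection α (u β) ∉ posOf Δ h := by
        rw [hprod, lie_mul_apply] at hcon; exact hcon
      have hγα : u β = α := by
        by_contra hne2
        exact hne (simple_reflect_mem hRS hreg (hsimp α (List.mem_cons_self (a := α) (l := m'))) hγ hne2)
      have hconj : rootReflection α = u * rootReflection β * u⁻¹ := by
        have := rr_conj u β
        rwa [hγα] at this
      refine ⟨m', fun a ha => hsimp a (List.mem_cons_of_mem _ ha), by simp, ?_⟩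
      rw [hprod, hconj]
      simp only [mul_assoc, inv_mul_cancel_left]
      rw [rr_mul_self, mul_one]
    · obtain ⟨m'', hm''s, hm''l, hm''p⟩ :=
        ihm (fun a ha => hsimp a (List.mem_cons_of_mem _ ha)) β hβ hγ
      refine ⟨α :: m'', ?_, ?_, ?_⟩
      · intro a ha
        rcases List.mem_cons.1 ha with rfl | ha
        · exact hsimp a (List.mem_cons_self (a := a) (l := m'))
        · exact hm''s a ha
      · simp only [List.length_cons]; omega
      · rw [hprod]
        simp only [List.map_cons, List.prod_cons, hm''p, mul_assoc]

theorem word_fix : ∀ (n : ℕ) (m : List V), m.length ≤ n →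
    (∀ α ∈ m, IsSimpleRoot (posOf Δ h) α) →
    (∀ β ∈ posOf Δ h, ((m.map rootReflection).prod) β ∈ posOf Δ h) →
    (m.map rootReflection).prod = 1 := by
  intro n
  induction n with
  | zero =>
    intro m hlen _ _
    rw [List.length_eq_zero_iff.1 (Nat.le_zero.1 hlen)]
    simp
  | succ n ih =>
    intro m hlen hsimp hfix
    rcases m.eq_nil_or_concat' with rfl | ⟨l₀, a, rfl⟩
    · simp
    · have hprod : ((l₀ ++ [a]).map rootReflection).prod =
          (l₀.map rootReflection).prod * rootReflection a := by
        simp [List.map_append, List.prod_append]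
      have hasimp : IsSimpleRoot (posOf Δ h) a :=
        hsimp a (List.mem_append_right _ (List.mem_singleton_self a))
      have hane : a ≠ 0 := hRS.ne_zero a hasimp.1.1
      have hfixa := hfix a hasimp.1
      rw [hprod, lie_mul_apply, rr_self a hane, map_neg] at hfixa
      have hnp : (l₀.map rootReflection).prod a ∉ posOf Δ h := by
        intro hcc
        have := hfixa.2
        rw [map_neg] at this
        linarith [hcc.2]
      obtain ⟨m', hm's, hm'l, hm'p⟩ := exch hRS hreg l₀
        (fun x hx => hsimp x (List.mem_append_left _ hx)) a hasimp.1 hnp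
      have hm'len : m'.length ≤ n := by
        have : (l₀ ++ [a]).length ≤ n + 1 := hlen
        simp only [List.length_append, List.length_singleton] at this
        omega
      have hm'fix : ∀ β ∈ posOf Δ h, ((m'.map rootReflection).prod) β ∈ posOf Δ h := by
        intro β hβ2
        rw [hm'p, ← hprod]
        exact hfix β hβ2
      have := ih m' hm'len hm's hm'fix
      rw [hm'p, ← hprod] at this
      exact this

/-- base case : an element of the Weyl group preserving the positive roots is trivial -/
theorem pos_preserving_eq_one {σ : V ≃ₗᵢ[ℝ] V} (hσ : σ ∈ weylGroup Δ)
    (hp : ∀ β ∈ posOf Δ h, σ β ∈ posOf Δ h) : σ = 1 := by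
  obtain ⟨m, hms, hmp⟩ := exists_word hRS hreg hσ
  have hres := word_fix hRS hreg m.length m le_rfl hms
    (by intro β hβ; rw [hmp]; exact hp β hβ)
  rw [hmp] at hres
  exact hres

theorem exists_flat : ∀ (n : ℕ) (g : V →ₗ[ℝ] ℝ), (∀ α ∈ Δ, g α ≠ 0) →
    (negOf Δ h g).ncard ≤ n →
    ∃ σ ∈ weylGroup Δ, ∀ β ∈ Δ, ((0 < h β ∧ h (σ.symm β) < 0) ↔ (0 < h β ∧ g β < 0)) := by
  intro n
  induction n with
  | zero =>
    intro g hg hcard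
    have hempty : negOf Δ h g = ∅ :=
      (Set.ncard_eq_zero (negOf_finite hRS h g)).1 (Nat.le_zero.1 hcard)
    refine ⟨1, one_mem _, fun β hβ => ?_⟩
    have h1 : (1 : V ≃ₗᵢ[ℝ] V).symm β = β := rfl
    constructor
    · rintro ⟨hpos, hneg⟩; rw [h1] at hneg; linarith
    · rintro ⟨hpos, hneg⟩
      have hmem : β ∈ negOf Δ h g := ⟨hβ, hpos, hneg⟩
      rw [hempty] at hmem
      exact absurd hmem (Set.notMem_empty β)
  | succ n ih =>
    intro g hg hcard
    rcases Set.eq_empty_or_nonempty (negOf Δ h g) with hempty | hne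
    · refine ⟨1, one_mem _, fun β hβ => ?_⟩
      have h1 : (1 : V ≃ₗᵢ[ℝ] V).symm β = β := rfl
      constructor
      · rintro ⟨hpos, hneg⟩; rw [h1] at hneg; linarith
      · rintro ⟨hpos, hneg⟩
        have : β ∈ negOf Δ h g := ⟨hβ, hpos, hneg⟩
        rw [hempty] at this
        exact absurd this (Set.notMem_empty β)
    · obtain ⟨α, hαg, hαsimp⟩ := exists_min_simple hRS hreg g (fun x y => g.map_add x y) hne
      have hαΔ : α ∈ Δ := hαg.1
      set g' : V →ₗ[ℝ] ℝ := g.comp ((rootReflection α).toLinearEquiv : V →ₗ[ℝ] V) with hg'def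
      have hg'app : ∀ v, g' v = g (rootReflection α v) := fun v => rfl
      have hg' : ∀ β ∈ Δ, g' β ≠ 0 := fun β hβ =>
        hg _ (hRS.reflect_mem α hαΔ β hβ)
      have hgodd : ∀ v, g (-v) = -g v := fun v => g.map_neg v
      have hcard' : (negOf Δ h ⇑g').ncard ≤ n := by
        have hlt := negOf_reflect_card hRS hreg g hgodd hαsimp hαg
        have : negOf Δ h ⇑g' = negOf Δ h (fun v => g (rootReflection α v)) := rfl
        rw [this]
        omega
      obtain ⟨σ', hσ'W, hσ'⟩ := ih g' hg' hcard'
      have hrrW : rootReflection α ∈ weylGroup Δ :=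
        Subgroup.subset_closure ⟨α, hαΔ, rfl⟩
      refine ⟨rootReflection α * σ', mul_mem hrrW hσ'W, ?_⟩
      intro β hβΔ
      have hsymm : (rootReflection α * σ').symm β = σ'.symm (rootReflection α β) :=
        mul_rr_symm σ' α β
      constructor
      · rintro ⟨hpos, hneg⟩
        refine ⟨hpos, ?_⟩
        by_cases hβα : β = α
        · subst hβα; exact hαg.2.2
        · have hγ : rootReflection α β ∈ posOf Δ h :=
            simple_reflect_mem hRS hreg hαsimp ⟨hβΔ, hpos⟩ hβα
          have := (hσ' (rootReflection α β) hγ.1).1 ⟨hγ.2, by rw [← hsymm]; exact hneg⟩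
          have h2 := this.2
          rw [hg'app, rr_rr] at h2
          exact h2
      · rintro ⟨hpos, hneg⟩
        refine ⟨hpos, ?_⟩
        by_cases hβα : β = α
        · subst hβα
          rw [hsymm, rr_self _ (hRS.ne_zero _ hαΔ), map_neg, map_neg]
          have hsαΔ : σ'.symm β ∈ Δ := (weyl_stab hRS σ' hσ'W β hαΔ).2
          rcases lt_or_gt_of_ne (hreg _ hsαΔ) with hlt | hgt
          · exfalso
            have := (hσ' β hαΔ).1 ⟨hαg.2.1, hlt⟩
            have h2 := this.2
            rw [hg'app, rr_self _ (hRS.ne_zero _ hαΔ), g.map_neg] at h2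
            linarith
          · linarith
        · have hγ : rootReflection α β ∈ posOf Δ h :=
            simple_reflect_mem hRS hreg hαsimp ⟨hβΔ, hpos⟩ hβα
          have hgβ : g' (rootReflection α β) < 0 := by
            rw [hg'app, rr_rr]; exact hneg
          have := (hσ' (rootReflection α β) hγ.1).2 ⟨hγ.2, hgβ⟩
          rw [hsymm]
          exact this.2


theorem eq_one_of_negOf_empty {σ : V ≃ₗᵢ[ℝ] V} (hσ : σ ∈ weylGroup Δ)
    (hempty : negOf Δ h (fun v => h (σ.symm v)) = ∅) : σ = 1 := by
  have hσinv : σ⁻¹ ∈ weylGroup Δ := inv_mem hσ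
  have hp : ∀ β ∈ posOf Δ h, σ⁻¹ β ∈ posOf Δ h := by
    rintro β ⟨hβΔ, hβpos⟩
    rw [LinearIsometryEquiv.coe_inv]
    have hmem : σ.symm β ∈ Δ := (weyl_stab hRS σ hσ β hβΔ).2
    refine ⟨hmem, ?_⟩
    rcases lt_or_gt_of_ne (hreg _ hmem) with hlt | hgt
    · exfalso
      have : β ∈ negOf Δ h (fun v => h (σ.symm v)) := ⟨hβΔ, hβpos, hlt⟩
      rw [hempty] at this
      exact absurd this (Set.notMem_empty β)
    · exact hgt
  have := pos_preserving_eq_one hRS hreg hσinv hp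
  exact inv_eq_one.mp this

theorem flat_unique : ∀ (n : ℕ), ∀ σ ∈ weylGroup Δ, ∀ τ ∈ weylGroup Δ,
    (negOf Δ h (fun v => h (σ.symm v))).ncard ≤ n →
    (∀ β ∈ Δ, ((0 < h β ∧ h (σ.symm β) < 0) ↔ (0 < h β ∧ h (τ.symm β) < 0))) → σ = τ := by
  intro n
  induction n with
  | zero =>
    intro σ hσ τ hτ hcard hiff
    have hemptyσ : negOf Δ h (fun v => h (σ.symm v)) = ∅ :=
      (Set.ncard_eq_zero (negOf_finite hRS h _)).1 (Nat.le_zero.1 hcard)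
    have hemptyτ : negOf Δ h (fun v => h (τ.symm v)) = ∅ := by
      rw [Set.eq_empty_iff_forall_notMem]
      rintro β ⟨hβΔ, hβpos, hβneg⟩
      have : β ∈ negOf Δ h (fun v => h (σ.symm v)) :=
        ⟨hβΔ, hβpos, ((hiff β hβΔ).2 ⟨hβpos, hβneg⟩).2⟩
      rw [hemptyσ] at this
      exact absurd this (Set.notMem_empty β)
    rw [eq_one_of_negOf_empty hRS hreg hσ hemptyσ, eq_one_of_negOf_empty hRS hreg hτ hemptyτ]
  | succ n ih =>
    intro σ hσ τ hτ hcard hiff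
    have hset : negOf Δ h (fun v => h (σ.symm v)) = negOf Δ h (fun v => h (τ.symm v)) := by
      ext β
      constructor
      · rintro ⟨hβΔ, hβpos, hβneg⟩
        exact ⟨hβΔ, hβpos, ((hiff β hβΔ).1 ⟨hβpos, hβneg⟩).2⟩
      · rintro ⟨hβΔ, hβpos, hβneg⟩
        exact ⟨hβΔ, hβpos, ((hiff β hβΔ).2 ⟨hβpos, hβneg⟩).2⟩
    rcases Set.eq_empty_or_nonempty (negOf Δ h (fun v => h (σ.symm v))) with hempty | hne
    · have hemptyτ : negOf Δ h (fun v => h (τ.symm v)) = ∅ := by rw [← hset]; exact hempty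
      rw [eq_one_of_negOf_empty hRS hreg hσ hempty, eq_one_of_negOf_empty hRS hreg hτ hemptyτ]
    · have haddσ : ∀ x y, h (σ.symm (x + y)) = h (σ.symm x) + h (σ.symm y) := by
        intro x y; rw [map_add, map_add]
      obtain ⟨α, hαgσ, hαsimp⟩ := exists_min_simple hRS hreg _ haddσ hne
      have hαΔ : α ∈ Δ := hαgσ.1
      have hαgτ : α ∈ negOf Δ h (fun v => h (τ.symm v)) := by rw [← hset]; exact hαgσ
      have hrrW : rootReflection α ∈ weylGroup Δ := Subgroup.subset_closure ⟨α, hαΔ, rfl⟩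
      have hoddσ : ∀ v, h (σ.symm (-v)) = -(h (σ.symm v)) := by
        intro v; rw [map_neg, map_neg]
      have hoddτ : ∀ v, h (τ.symm (-v)) = -(h (τ.symm v)) := by
        intro v; rw [map_neg, map_neg]
      have hfunσ : (fun v => h ((rootReflection α * σ).symm v)) =
          (fun v => h (σ.symm (rootReflection α v))) :=
        funext fun v => congrArg h (mul_rr_symm σ α v)
      have hfunτ : (fun v => h ((rootReflection α * τ).symm v)) =
          (fun v => h (τ.symm (rootReflection α v))) :=
        funext fun v => congrArg h (mul_rr_symm τ α v)
      have hsetσ : negOf Δ h (fun v => h ((rootReflection α * σ).symm v)) =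
          rootReflection α '' (negOf Δ h (fun v => h (σ.symm v)) \ {α}) := by
        rw [hfunσ]
        exact negOf_reflect hRS hreg _ hoddσ hαsimp hαgσ
      have hsetτ : negOf Δ h (fun v => h ((rootReflection α * τ).symm v)) =
          rootReflection α '' (negOf Δ h (fun v => h (τ.symm v)) \ {α}) := by
        rw [hfunτ]
        exact negOf_reflect hRS hreg _ hoddτ hαsimp hαgτ
      have hcard2 : (negOf Δ h (fun v => h ((rootReflection α * σ).symm v))).ncard ≤ n := by
        have hlt := negOf_reflect_card hRS hreg _ hoddσ hαsimp hαgσ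
        rw [hfunσ]
        omega
      have hiff2 : ∀ β ∈ Δ, ((0 < h β ∧ h ((rootReflection α * σ).symm β) < 0) ↔
          (0 < h β ∧ h ((rootReflection α * τ).symm β) < 0)) := by
        intro β hβΔ
        constructor
        · rintro ⟨hβpos, hβneg⟩
          have hmem : β ∈ negOf Δ h (fun v => h ((rootReflection α * σ).symm v)) :=
            ⟨hβΔ, hβpos, hβneg⟩
          rw [hsetσ, hset, ← hsetτ] at hmem
          exact ⟨hmem.2.1, hmem.2.2⟩
        · rintro ⟨hβpos, hβneg⟩
          have hmem : β ∈ negOf Δ h (fun v => h ((rootReflection α * τ).symm v)) :=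
            ⟨hβΔ, hβpos, hβneg⟩
          rw [hsetτ, ← hset, ← hsetσ] at hmem
          exact ⟨hmem.2.1, hmem.2.2⟩
      have heq := ih (rootReflection α * σ) (mul_mem hrrW hσ) (rootReflection α * τ)
        (mul_mem hrrW hτ) hcard2 hiff2
      exact mul_left_cancel heq

end RS2

theorem invSet_weyl_eq {Δ : Set V} (hRS : IsRootSystem Δ) {h : V →ₗ[ℝ] ℝ}
    {σ : V ≃ₗᵢ[ℝ] V} (hσ : σ ∈ weylGroup Δ) :
    invSet (posOf Δ h) σ = {α | α ∈ Δ ∧ 0 < h α ∧ h (σ.symm α) < 0} := by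
  ext α
  constructor
  · rintro ⟨⟨hαΔ, hαpos⟩, x, hx, rfl⟩
    rw [Set.mem_neg] at hx
    refine ⟨hαΔ, hαpos, ?_⟩
    rw [LinearIsometryEquiv.symm_apply_apply]
    have := hx.2
    rw [map_neg] at this
    linarith
  · rintro ⟨hαΔ, hαpos, hαneg⟩
    refine ⟨⟨hαΔ, hαpos⟩, σ.symm α, ?_, LinearIsometryEquiv.apply_symm_apply σ α⟩
    rw [Set.mem_neg]
    have hxΔ : σ.symm α ∈ Δ := (weyl_stab hRS σ hσ α hαΔ).2
    refine ⟨neg_mem_rs hRS hxΔ, ?_⟩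
    rw [map_neg]
    linarith

/-- existence and uniqueness of the flattening `f_Δ(w)`. -/
theorem flattening_exists_unique
    (Φ P : Set V) (hΦ : IsRootSystem Φ) (hP : IsPositiveSystem Φ P)
    (U : Submodule ℝ V) (w : V ≃ₗᵢ[ℝ] V) (hw : w ∈ weylGroup Φ) :
    ∃! σ : V ≃ₗᵢ[ℝ] V, σ ∈ weylGroup (Φ ∩ (U : Set V)) ∧
      invSet (Φ ∩ (U : Set V) ∩ P) σ = invSet P w ∩ (Φ ∩ (U : Set V)) := by
  obtain ⟨h, hreg, rfl⟩ := hP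
  set Δ : Set V := Φ ∩ (U : Set V) with hΔdef
  have hΔRS : IsRootSystem Δ := by
    constructor
    · exact hΦ.finite.subset Set.inter_subset_left
    · exact fun α hα => hΦ.ne_zero α hα.1
    · rintro α ⟨hα1, hα2⟩ β ⟨hβ1, hβ2⟩
      refine ⟨hΦ.reflect_mem α hα1 β hβ1, ?_⟩
      rw [rr_apply]
      exact Submodule.sub_mem U hβ2 (Submodule.smul_mem U _ hα2)
    · exact fun α hα β hβ => hΦ.crystal α hα.1 β hβ.1
    · exact fun α hα t ht => hΦ.reduced α hα.1 t ht.1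
  have hregΔ : ∀ α ∈ Δ, h α ≠ 0 := fun α hα => hreg α hα.1
  have hPpos : Φ ∩ (U : Set V) ∩ {α ∈ Φ | 0 < h α} = posOf Δ h := by
    ext α
    constructor
    · rintro ⟨hα1, hα2⟩; exact ⟨hα1, hα2.2⟩
    · rintro ⟨hα1, hα2⟩; exact ⟨hα1, hα1.1, hα2⟩
  have hPeq : {α ∈ Φ | 0 < h α} = posOf Φ h := rfl
  -- the target set
  have htarget : invSet {α ∈ Φ | 0 < h α} w ∩ Δ =
      {α | α ∈ Δ ∧ 0 < h α ∧ h (w.symm α) < 0} := by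
    rw [hPeq, invSet_weyl_eq hΦ hw]
    ext α
    constructor
    · rintro ⟨⟨hα1, hα2, hα3⟩, hα4⟩; exact ⟨hα4, hα2, hα3⟩
    · rintro ⟨hα1, hα2, hα3⟩; exact ⟨⟨hα1.1, hα2, hα3⟩, hα1⟩
  set g : V →ₗ[ℝ] ℝ := h.comp ((w.symm.toLinearEquiv : V ≃ₗ[ℝ] V) : V →ₗ[ℝ] V) with hgdef
  have hgapp : ∀ v, g v = h (w.symm v) := fun v => rfl
  have hgreg : ∀ α ∈ Δ, g α ≠ 0 := by
    intro α hα
    rw [hgapp]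
    exact hreg _ (weyl_stab hΦ w hw α hα.1).2
  obtain ⟨σ, hσW, hσiff⟩ := exists_flat hΔRS hregΔ (negOf Δ h g).ncard g hgreg le_rfl
  have hchar : ∀ τ : V ≃ₗᵢ[ℝ] V, τ ∈ weylGroup Δ →
      (invSet (Φ ∩ (U : Set V) ∩ {α ∈ Φ | 0 < h α}) τ =
        invSet {α ∈ Φ | 0 < h α} w ∩ Δ ↔
      ∀ β ∈ Δ, ((0 < h β ∧ h (τ.symm β) < 0) ↔ (0 < h β ∧ g β < 0))) := by
    intro τ hτW
    rw [hPpos, invSet_weyl_eq hΔRS hτW, htarget]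
    constructor
    · intro hseteq β hβΔ
      constructor
      · rintro ⟨h1, h2⟩
        have : β ∈ {α | α ∈ Δ ∧ 0 < h α ∧ h (w.symm α) < 0} := by
          rw [← hseteq]; exact ⟨hβΔ, h1, h2⟩
        exact ⟨this.2.1, by rw [hgapp]; exact this.2.2⟩
      · rintro ⟨h1, h2⟩
        rw [hgapp] at h2
        have : β ∈ {α | α ∈ Δ ∧ 0 < h α ∧ h (τ.symm α) < 0} := by
          rw [hseteq]; exact ⟨hβΔ, h1, h2⟩
        exact ⟨this.2.1, this.2.2⟩
    · intro hiff
      ext β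
      constructor
      · rintro ⟨hβΔ, h1, h2⟩
        have := (hiff β hβΔ).1 ⟨h1, h2⟩
        rw [hgapp] at this
        exact ⟨hβΔ, this.1, this.2⟩
      · rintro ⟨hβΔ, h1, h2⟩
        have := (hiff β hβΔ).2 ⟨h1, by rw [hgapp]; exact h2⟩
        exact ⟨hβΔ, this.1, this.2⟩
  refine ⟨σ, ⟨hσW, (hchar σ hσW).2 hσiff⟩, ?_⟩
  rintro τ ⟨hτW, hτset⟩
  have hτiff := (hchar τ hτW).1 hτset
  apply flat_unique hΔRS hregΔ (negOf Δ h (fun v => h (τ.symm v))).ncard τ hτW σ hσW le_rfl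
  intro β hβΔ
  exact (hτiff β hβΔ).trans ((hσiff β hβΔ)).symm
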